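/- There exists a constant C > 0 with the following property. For all integers n ≥ 2 and k with C·log(n) ≤ k ≤ n and k dividing n, there exists a probability distribution D supported on at most 2^{C·k} · n^C unit vectors of S^{n−1} such that for every w ∈ ℝ^n, (E_{x∼D}[⟨x,w⟩^{2k}])^{1/(2k)} ≥ (1/C) · √(k/n) · ‖w‖₂. -/

import Mathlib

open MeasureTheory Metric

lemma sep_card_le (k : ℕ) (P : Finset (EuclideanSpace ℝ (Fin k)))
    (hunit : ∀ p ∈ P, ‖p‖ = 1)
    (hsep : (↑P : Set (EuclideanSpace ℝ (Fin k))).Pairwise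
      (fun a b => (1:ℝ)/10 ≤ dist a b)) :
    P.card ≤ 21 ^ k := by
  classical
  set μ : Measure (EuclideanSpace ℝ (Fin k)) := volume with hμ
  have hdisj : (↑P : Set (EuclideanSpace ℝ (Fin k))).Pairwise
      (Function.onFun Disjoint (fun p => ball p (1/20))) := by
    intro a ha b hb hab
    refine Set.disjoint_left.2 fun x hxa hxb => ?_
    have h1 := hsep ha hb hab
    have : dist a b < 1/10 := by
      calc dist a b ≤ dist a x + dist x b := dist_triangle _ _ _
        _ < 1/20 + 1/20 := by
            have := mem_ball.1 hxa
            have := mem_ball.1 hxb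
            rw [dist_comm a x]; linarith [mem_ball.1 hxa, mem_ball.1 hxb]
        _ = 1/10 := by norm_num
    linarith
  have hsub : (⋃ p ∈ P, ball p (1/20)) ⊆ ball (0 : EuclideanSpace ℝ (Fin k)) (21/20) := by
    intro x hx
    simp only [Set.mem_iUnion] at hx
    obtain ⟨p, hp, hxp⟩ := hx
    have : dist x p < 1/20 := mem_ball.1 hxp
    have hpn : ‖p‖ = 1 := hunit p hp
    have : dist x 0 ≤ dist x p + dist p 0 := dist_triangle _ _ _
    rw [mem_ball]
    have : dist p 0 = 1 := by rw [dist_zero_right, hpn]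
    calc dist x 0 ≤ dist x p + dist p 0 := dist_triangle _ _ _
      _ < 1/20 + 1 := by rw [this]; linarith [mem_ball.1 hxp]
      _ = 21/20 := by norm_num
  have hmeas : μ (⋃ p ∈ P, ball p (1/20)) = ∑ p ∈ P, μ (ball p (1/20)) :=
    measure_biUnion_finset hdisj (fun p _ => measurableSet_ball)
  have hball : ∀ p : EuclideanSpace ℝ (Fin k),
      μ (ball p (1/20)) = ENNReal.ofReal ((1/20 : ℝ) ^ k) * μ (ball 0 1) := by
    intro p
    rw [Measure.addHaar_ball_of_pos μ p (by norm_num : (0:ℝ) < 1/20)]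
    simp [finrank_euclideanSpace_fin]
  have hball2 : μ (ball (0 : EuclideanSpace ℝ (Fin k)) (21/20))
      = ENNReal.ofReal ((21/20 : ℝ) ^ k) * μ (ball 0 1) := by
    rw [Measure.addHaar_ball_of_pos μ _ (by norm_num : (0:ℝ) < 21/20)]
    simp [finrank_euclideanSpace_fin]
  have hVpos : μ (ball (0 : EuclideanSpace ℝ (Fin k)) 1) ≠ 0 :=
    (measure_ball_pos μ 0 one_pos).ne'
  have hVtop : μ (ball (0 : EuclideanSpace ℝ (Fin k)) 1) ≠ ⊤ :=
    measure_ball_lt_top.ne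
  have key : (P.card : ENNReal) * (ENNReal.ofReal ((1/20 : ℝ) ^ k) * μ (ball 0 1))
      ≤ ENNReal.ofReal ((21/20 : ℝ) ^ k) * μ (ball 0 1) := by
    calc (P.card : ENNReal) * (ENNReal.ofReal ((1/20 : ℝ) ^ k) * μ (ball 0 1))
        = ∑ p ∈ P, μ (ball p (1/20)) := by
          rw [Finset.sum_congr rfl (fun p _ => hball p), Finset.sum_const, nsmul_eq_mul]
      _ = μ (⋃ p ∈ P, ball p (1/20)) := hmeas.symm
      _ ≤ μ (ball 0 (21/20)) := measure_mono hsub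
      _ = _ := hball2
  rw [← mul_assoc] at key
  have key2 : (P.card : ENNReal) * ENNReal.ofReal ((1/20 : ℝ) ^ k)
      ≤ ENNReal.ofReal ((21/20 : ℝ) ^ k) :=
    (ENNReal.mul_le_mul_iff_left hVpos hVtop).1 key
  have key3 : (P.card : ℝ) * (1/20 : ℝ) ^ k ≤ (21/20 : ℝ) ^ k := by
    have := key2
    rw [← ENNReal.ofReal_natCast, ← ENNReal.ofReal_mul (by positivity)] at this
    exact (ENNReal.ofReal_le_ofReal_iff (by positivity)).1 this
  have : (P.card : ℝ) ≤ (21 : ℝ) ^ k := by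
    have h20 : (0:ℝ) < 20 ^ k := by positivity
    rw [div_pow, div_pow, one_pow, mul_one_div, div_le_div_iff₀ h20 h20] at key3
    exact le_of_mul_le_mul_right key3 h20
  exact_mod_cast this

lemma exists_net (k : ℕ) :
    ∃ N : Finset (EuclideanSpace ℝ (Fin k)),
      (∀ u ∈ N, ‖u‖ = 1) ∧ N.card ≤ 21 ^ k ∧
      ∀ v : EuclideanSpace ℝ (Fin k), ‖v‖ = 1 → ∃ u ∈ N, dist u v < 1/10 := by
  classical
  set S : Set ℕ := {c | ∃ P : Finset (EuclideanSpace ℝ (Fin k)),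
    (∀ p ∈ P, ‖p‖ = 1) ∧
    (↑P : Set (EuclideanSpace ℝ (Fin k))).Pairwise (fun a b => (1:ℝ)/10 ≤ dist a b) ∧
    P.card = c} with hS
  have h0 : 0 ∈ S := ⟨∅, by simp, by simp, rfl⟩
  have hbdd : ∀ c ∈ S, c ≤ 21 ^ k := by
    rintro c ⟨P, h1, h2, rfl⟩
    exact sep_card_le k P h1 h2
  have hne : S.Nonempty := ⟨0, h0⟩
  have hba : BddAbove S := ⟨21 ^ k, fun c hc => hbdd c hc⟩
  have hmem : sSup S ∈ S := Nat.sSup_mem hne hba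
  obtain ⟨P, hPunit, hPsep, hPcard⟩ := hmem
  refine ⟨P, hPunit, hPcard ▸ hbdd _ (hPcard ▸ ⟨P, hPunit, hPsep, rfl⟩), ?_⟩
  intro v hv
  by_contra hcon
  push_neg at hcon
  have hvP : v ∉ P := by
    intro hvP
    have := hcon v hvP
    simp at this
    linarith [this]
  have hsep' : (↑(insert v P) : Set (EuclideanSpace ℝ (Fin k))).Pairwise
      (fun a b => (1:ℝ)/10 ≤ dist a b) := by
    rw [Finset.coe_insert]
    refine (letI : Std.Symm (fun a b : EuclideanSpace ℝ (Fin k) => (1:ℝ)/10 ≤ dist a b) := ⟨?_⟩; Set.pairwise_insert_of_symm).2 ⟨hPsep, fun b hb _ => ?_⟩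
    · intro a b h
      rwa [dist_comm]
    · rw [dist_comm]
      exact hcon b hb
  have hins : (insert v P).card ∈ S :=
    ⟨insert v P, by
      intro p hp
      rcases Finset.mem_insert.1 hp with rfl | hp
      · exact hv
      · exact hPunit p hp, hsep', rfl⟩
  have hle : (insert v P).card ≤ sSup S := le_csSup hba hins
  rw [Finset.card_insert_of_notMem hvP, hPcard] at hle
  omega

lemma net_inner (k : ℕ) (N : Finset (EuclideanSpace ℝ (Fin k)))
    (hN : ∀ u ∈ N, ‖u‖ = 1)
    (hnet : ∀ v : EuclideanSpace ℝ (Fin k), ‖v‖ = 1 → ∃ u ∈ N, dist u v < 1/10)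
    (v : EuclideanSpace ℝ (Fin k)) (hv : v ≠ 0) :
    ∃ u ∈ N, (9/10 : ℝ) * ‖v‖ ≤ (inner ℝ u v : ℝ) := by
  have hvn : (0:ℝ) < ‖v‖ := norm_pos_iff.2 hv
  set v' : EuclideanSpace ℝ (Fin k) := ‖v‖⁻¹ • v with hv'
  have hv'1 : ‖v'‖ = 1 := norm_smul_inv_norm hv
  obtain ⟨u, huN, hdu⟩ := hnet v' hv'1
  refine ⟨u, huN, ?_⟩
  have hu1 : ‖u‖ = 1 := hN u huN
  have hsq : ‖u - v'‖ ^ 2 < (1/10:ℝ) ^ 2 := by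
    have h1 : ‖u - v'‖ < 1/10 := by rwa [← dist_eq_norm]
    have h2 : (0:ℝ) ≤ ‖u - v'‖ := norm_nonneg _
    nlinarith
  have hexp : ‖u - v'‖ ^ 2 = ‖u‖ ^ 2 - 2 * (inner ℝ u v' : ℝ) + ‖v'‖ ^ 2 :=
    norm_sub_sq_real u v'
  have hip : (9/10 : ℝ) ≤ (inner ℝ u v' : ℝ) := by
    rw [hexp, hu1, hv'1] at hsq
    nlinarith
  have : (inner ℝ u v : ℝ) = ‖v‖ * (inner ℝ u v' : ℝ) := by
    rw [hv', real_inner_smul_right]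
    field_simp
  rw [this]
  calc (9/10 : ℝ) * ‖v‖ = ‖v‖ * (9/10) := by ring
    _ ≤ ‖v‖ * (inner ℝ u v' : ℝ) := by
        exact mul_le_mul_of_nonneg_left hip hvn.le

set_option maxHeartbeats 1000000 in
/-- **Spherical hitting-set distribution with large moments in every direction.**
There is a constant `C > 0` such that for all `n ≥ 2` and `k` with
`C·log n ≤ k ≤ n` and `k ∣ n`, there is a probability distribution `D` supported on at
most `2^{C·k} · n^C` unit vectors of `S^{n-1}` such that for every `w ∈ ℝ^n`,
`(E_{x∼D}[⟨x,w⟩^{2k}])^{1/(2k)} ≥ (1/C) · √(k/n) · ‖w‖₂`. -/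
theorem stmt_12 :
    ∃ C : ℝ, 0 < C ∧ ∀ (n k : ℕ), 2 ≤ n → C * Real.log n ≤ k → k ≤ n → k ∣ n →
      ∃ (s : Finset (Fin n → ℝ)) (D : (Fin n → ℝ) → ℝ),
        (∀ x ∈ s, ∑ i, x i ^ 2 = 1) ∧
        ((s.card : ℝ) ≤ 2 ^ (C * k) * (n : ℝ) ^ C) ∧
        (∀ x, 0 ≤ D x) ∧ (∀ x ∉ s, D x = 0) ∧ (∑ x ∈ s, D x = 1) ∧
        ∀ w : Fin n → ℝ,
          (1 / C) * Real.sqrt ((k : ℝ) / n) * Real.sqrt (∑ i, w i ^ 2) ≤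
            (∑ x ∈ s, D x * (∑ i, x i * w i) ^ (2 * k)) ^ ((1 : ℝ) / (2 * k)) := by
  classical
  refine ⟨100, by norm_num, ?_⟩
  intro n k hn hk hkn hdvd
  have hn0 : 0 < n := lt_of_lt_of_le (by norm_num) hn
  have hn1R : (1:ℝ) < n := by exact_mod_cast hn.trans_lt' (by norm_num)
  have hlogn : (0:ℝ) < Real.log n := Real.log_pos hn1R
  have hk0 : 0 < k := by
    rcases Nat.eq_zero_or_pos k with rfl | h
    · exfalso
      simp only [Nat.cast_zero] at hk
      nlinarith
    · exact h
  have hk0R : (0:ℝ) < k := by exact_mod_cast hk0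
  obtain ⟨m, hm⟩ := hdvd
  have hm0 : 0 < m := by
    rcases Nat.eq_zero_or_pos m with rfl | h
    · omega
    · exact h
  have hm0R : (0:ℝ) < m := by exact_mod_cast hm0
  -- the net
  obtain ⟨N, hNunit, hNcard, hNnet⟩ := exists_net k
  -- key log bound : n ≤ 3 ^ k
  have hn3k : (n:ℝ) ≤ 3 ^ k := by
    have hlog3 : (1:ℝ) < Real.log 3 := by
      rw [Real.lt_log_iff_exp_lt (by norm_num : (0:ℝ) < 3)]
      calc Real.exp 1 < 2.7182818286 := Real.exp_one_lt_d9
        _ < 3 := by norm_num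
    have h1 : Real.log n ≤ (k:ℝ) / 100 := by linarith
    have h2 : Real.log n ≤ (k:ℝ) * Real.log 3 := by
      have : (k:ℝ)/100 ≤ (k:ℝ) * Real.log 3 := by nlinarith
      linarith
    have hn0R : (0:ℝ) < n := by exact_mod_cast hn0
    calc (n:ℝ) = Real.exp (Real.log n) := (Real.exp_log hn0R).symm
      _ ≤ Real.exp ((k:ℝ) * Real.log 3) := Real.exp_le_exp.2 h2
      _ = 3 ^ k := by
          rw [mul_comm, Real.exp_mul, Real.exp_log (by norm_num : (0:ℝ) < 3),
            Real.rpow_natCast]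
  -- the equivalence Fin n ≃ Fin k × Fin m
  let e : Fin n ≃ Fin k × Fin m := (finCongr hm).trans finProdFinEquiv.symm
  -- the vectors
  let f : Fin m → EuclideanSpace ℝ (Fin k) → (Fin n → ℝ) :=
    fun i u t => if (e t).2 = i then u (e t).1 else 0
  let s : Finset (Fin n → ℝ) := (Finset.univ (α := Fin m) ×ˢ N).image (fun p => f p.1 p.2)
  let D : (Fin n → ℝ) → ℝ := fun x => if x ∈ s then ((s.card : ℝ))⁻¹ else 0
  -- norms of elements of N
  have hNsq : ∀ u ∈ N, ∑ j, (u j) ^ 2 = 1 := by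
    intro u hu
    have h1 : ‖u‖ = 1 := hNunit u hu
    have h2 : ‖u‖ = Real.sqrt (∑ j, ‖u j‖ ^ 2) := EuclideanSpace.norm_eq u
    have h3 : ∑ j, ‖u j‖ ^ 2 = ∑ j, (u j) ^ 2 := by
      refine Finset.sum_congr rfl fun j _ => ?_
      rw [Real.norm_eq_abs, sq_abs]
    have h4 : Real.sqrt (∑ j, (u j) ^ 2) = 1 := by rw [← h3, ← h2, h1]
    have h5 : (0:ℝ) ≤ ∑ j, (u j) ^ 2 := Finset.sum_nonneg fun j _ => sq_nonneg _
    nlinarith [Real.sq_sqrt h5, h4]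
  -- members of s are unit vectors
  have hsq : ∀ x ∈ s, ∑ t, x t ^ 2 = 1 := by
    intro x hx
    obtain ⟨⟨i, u⟩, hp, rfl⟩ := Finset.mem_image.1 hx
    have hu : u ∈ N := (Finset.mem_product.1 hp).2
    calc ∑ t, f i u t ^ 2
        = ∑ p : Fin k × Fin m, (if p.2 = i then u p.1 else 0) ^ 2 := by
          rw [← Equiv.sum_comp e (fun p : Fin k × Fin m => (if p.2 = i then u p.1 else 0) ^ 2)]
      _ = ∑ j : Fin k, ∑ i' : Fin m, (if i' = i then (u j) ^ 2 else 0) := by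
          rw [Fintype.sum_prod_type]
          refine Finset.sum_congr rfl fun j _ => Finset.sum_congr rfl fun i' _ => ?_
          split <;> simp
      _ = ∑ j : Fin k, (u j) ^ 2 := by
          refine Finset.sum_congr rfl fun j _ => ?_
          simp [Finset.sum_ite_eq']
      _ = 1 := hNsq u hu
  -- inner products
  have hip : ∀ (i : Fin m) (u : EuclideanSpace ℝ (Fin k)) (w : Fin n → ℝ),
      ∑ t, f i u t * w t = ∑ j, u j * w (e.symm (j, i)) := by
    intro i u w
    calc ∑ t, f i u t * w t
        = ∑ t, (if (e t).2 = i then u (e t).1 else 0) * w (e.symm (e t)) := by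
          refine Finset.sum_congr rfl fun t _ => ?_
          rw [Equiv.symm_apply_apply]
      _ = ∑ p : Fin k × Fin m, (if p.2 = i then u p.1 else 0) * w (e.symm p) := by
          rw [← Equiv.sum_comp e
            (fun p : Fin k × Fin m => (if p.2 = i then u p.1 else 0) * w (e.symm p))]
      _ = ∑ j : Fin k, ∑ i' : Fin m,
            (if i' = i then u j * w (e.symm (j, i')) else 0) := by
          rw [Fintype.sum_prod_type]
          refine Finset.sum_congr rfl fun j _ => Finset.sum_congr rfl fun i' _ => ?_
          split <;> simp
      _ = ∑ j, u j * w (e.symm (j, i)) := by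
          refine Finset.sum_congr rfl fun j _ => ?_
          exact (Finset.sum_ite_eq' Finset.univ i (fun i' => u j * w (e.symm (j, i')))).trans (by simp)
  -- nonemptiness of s
  have hNne : N.Nonempty := by
    have hk1 : Nonempty (Fin k) := ⟨⟨0, hk0⟩⟩
    obtain ⟨u, hu, _⟩ := hNnet (EuclideanSpace.single (⟨0, hk0⟩ : Fin k) (1:ℝ)) (by
      rw [EuclideanSpace.norm_single]; norm_num)
    exact ⟨u, hu⟩
  obtain ⟨u0, hu0⟩ := hNne
  have hsne : s.Nonempty := by
    refine ⟨f ⟨0, hm0⟩ u0, Finset.mem_image.2 ⟨(⟨0, hm0⟩, u0), ?_, rfl⟩⟩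
    exact Finset.mem_product.2 ⟨Finset.mem_univ _, hu0⟩
  have hscard0 : 0 < s.card := Finset.card_pos.2 hsne
  have hscard0R : (0:ℝ) < s.card := by exact_mod_cast hscard0
  -- cardinality bound
  have hm_le_n : m ≤ n := by
    exact Nat.le_of_dvd hn0 ⟨k, by rw [hm, Nat.mul_comm]⟩
  have hcard_le : (s.card : ℝ) ≤ (n : ℝ) * 21 ^ k := by
    have h1 : s.card ≤ m * N.card := by
      calc s.card ≤ (Finset.univ (α := Fin m) ×ˢ N).card := Finset.card_image_le
        _ = m * N.card := by rw [Finset.card_product, Finset.card_univ, Fintype.card_fin]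
    have h2 : s.card ≤ n * 21 ^ k :=
      h1.trans (Nat.mul_le_mul hm_le_n hNcard)
    calc (s.card : ℝ) ≤ ((n * 21 ^ k : ℕ) : ℝ) := by exact_mod_cast h2
      _ = (n : ℝ) * 21 ^ k := by push_cast; ring
  refine ⟨s, D, hsq, ?_, ?_, ?_, ?_, ?_⟩
  · -- cardinality bound vs 2^(100 k) * n^100
    calc (s.card : ℝ) ≤ (n : ℝ) * 21 ^ k := hcard_le
      _ ≤ (n : ℝ) ^ (100:ℝ) * 2 ^ ((100:ℝ) * k) := by
          have ha : (n:ℝ) ≤ (n:ℝ) ^ (100:ℝ) := by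
            nth_rewrite 1 [← Real.rpow_one (n:ℝ)]
            exact Real.rpow_le_rpow_of_exponent_le hn1R.le (by norm_num)
          have hb : (21:ℝ) ^ k ≤ 2 ^ ((100:ℝ) * k) := by
            have h1 : (2:ℝ) ^ ((100:ℝ) * k) = ((2:ℝ) ^ (100:ℕ)) ^ k := by
              rw [← Real.rpow_natCast ((2:ℝ) ^ (100:ℕ)) k, ← Real.rpow_natCast (2:ℝ) 100,
                ← Real.rpow_mul (by norm_num)]
              norm_num
            rw [h1]
            exact pow_le_pow_left₀ (by norm_num) (by norm_num) k
          have h21 : (0:ℝ) ≤ 21 ^ k := by positivity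
          calc (n:ℝ) * 21 ^ k ≤ ((n:ℝ) ^ (100:ℝ)) * 21 ^ k :=
                mul_le_mul_of_nonneg_right ha h21
            _ ≤ ((n:ℝ) ^ (100:ℝ)) * 2 ^ ((100:ℝ) * k) :=
                mul_le_mul_of_nonneg_left hb (by positivity)
      _ = 2 ^ ((100:ℝ) * k) * (n : ℝ) ^ (100:ℝ) := by ring
  · intro x
    by_cases hx : x ∈ s <;> simp [D, hx, inv_nonneg.2 hscard0R.le]
  · intro x hx
    simp [D, hx]
  · simp only [D]
    rw [Finset.sum_ite_of_true (fun x hx => hx), Finset.sum_const, nsmul_eq_mul]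
    field_simp
  · -- the moment bound
    intro w
    set Sw := ∑ i, w i ^ 2 with hSw
    have hSw0 : 0 ≤ Sw := Finset.sum_nonneg fun i _ => sq_nonneg _
    have hTnn : (0:ℝ) ≤ ∑ x ∈ s, D x * (∑ i, x i * w i) ^ (2 * k) := by
      refine Finset.sum_nonneg fun x hx => mul_nonneg ?_ ?_
      · by_cases h : x ∈ s <;> simp [D, h, inv_nonneg.2 hscard0R.le]
      · exact (even_two_mul k).pow_nonneg _
    rcases eq_or_lt_of_le hSw0 with hSweq | hSwpos
    · rw [← hSweq, Real.sqrt_zero, mul_zero]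
      exact Real.rpow_nonneg hTnn _
    -- block vectors
    set v : Fin m → EuclideanSpace ℝ (Fin k) := fun i => WithLp.toLp 2 (fun j => w (e.symm (j, i))) with hv
    have hvsum : ∑ i, ‖v i‖ ^ 2 = Sw := by
      have hnormsq : ∀ i, ‖v i‖ ^ 2 = ∑ j, (v i j) ^ 2 := by
        intro i
        rw [EuclideanSpace.norm_eq, Real.sq_sqrt (Finset.sum_nonneg fun j _ => sq_nonneg _)]
        refine Finset.sum_congr rfl fun j _ => ?_
        rw [Real.norm_eq_abs, sq_abs]
      calc ∑ i, ‖v i‖ ^ 2 = ∑ i, ∑ j, (v i j) ^ 2 :=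
            Finset.sum_congr rfl fun i _ => hnormsq i
        _ = ∑ j : Fin k, ∑ i : Fin m, (w (e.symm (j, i))) ^ 2 := Finset.sum_comm
        _ = ∑ p : Fin k × Fin m, (w (e.symm p)) ^ 2 := by
            rw [Fintype.sum_prod_type]
        _ = ∑ t, w t ^ 2 := Equiv.sum_comp e.symm (fun t => w t ^ 2)
    -- a good block
    have hexists : ∃ i : Fin m, Sw / m ≤ ‖v i‖ ^ 2 := by
      by_contra hcon
      push_neg at hcon
      have : ∑ i, ‖v i‖ ^ 2 < ∑ _i : Fin m, Sw / m :=
        Finset.sum_lt_sum_of_nonempty (Finset.univ_nonempty_iff.2 ⟨⟨0, hm0⟩⟩)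
          fun i _ => hcon i
      rw [hvsum, Finset.sum_const, Finset.card_univ, Fintype.card_fin, nsmul_eq_mul] at this
      rw [mul_div_cancel₀ _ (ne_of_gt hm0R)] at this
      exact lt_irrefl _ this
    obtain ⟨i₀, hi₀⟩ := hexists
    have hvi0 : v i₀ ≠ 0 := by
      intro h
      rw [h, norm_zero] at hi₀
      have h0 : (0:ℝ) ^ 2 = 0 := by norm_num
      rw [h0] at hi₀
      nlinarith [div_pos hSwpos hm0R]
    obtain ⟨u, huN, hu⟩ := net_inner k N hNunit hNnet (v i₀) hvi0
    set x0 : Fin n → ℝ := f i₀ u with hx0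
    have hx0s : x0 ∈ s :=
      Finset.mem_image.2 ⟨(i₀, u), Finset.mem_product.2 ⟨Finset.mem_univ _, huN⟩, rfl⟩
    have hip0 : (inner ℝ u (v i₀) : ℝ) = ∑ t, x0 t * w t := by
      rw [hip i₀ u w]
      simp [PiLp.inner_apply, RCLike.inner_apply, conj_trivial, v]
      exact Finset.sum_congr rfl fun j _ => mul_comm _ _
    set B : ℝ := Real.sqrt (Sw / m) with hB
    have hBpos : 0 < B := Real.sqrt_pos.2 (div_pos hSwpos hm0R)
    have hBle : B ≤ ‖v i₀‖ := by
      rw [hB]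
      calc Real.sqrt (Sw / m) ≤ Real.sqrt (‖v i₀‖ ^ 2) := Real.sqrt_le_sqrt hi₀
        _ = ‖v i₀‖ := Real.sqrt_sq (norm_nonneg _)
    have hx0ip : (9/10 : ℝ) * B ≤ ∑ t, x0 t * w t := by
      rw [← hip0]
      calc (9/10 : ℝ) * B ≤ (9/10 : ℝ) * ‖v i₀‖ := by linarith
        _ ≤ (inner ℝ u (v i₀) : ℝ) := hu
    -- rewrite the LHS
    have hLHS : (1 / 100 : ℝ) * Real.sqrt ((k : ℝ) / n) * Real.sqrt Sw = (1/100) * B := by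
      rw [hB, mul_assoc, ← Real.sqrt_mul (by positivity)]
      congr 2
      have hnR : (n:ℝ) = (k:ℝ) * m := by exact_mod_cast hm
      rw [hnR]
      field_simp
    rw [hLHS]
    -- key numeric inequality
    have hnum : (n:ℝ) * 21 ^ k * (1/100 : ℝ) ^ (2*k) ≤ (9/10 : ℝ) ^ (2*k) := by
      have h63 : (n:ℝ) * 21 ^ k ≤ 63 ^ k := by
        calc (n:ℝ) * 21 ^ k ≤ 3 ^ k * 21 ^ k :=
              mul_le_mul_of_nonneg_right hn3k (by positivity)
          _ = 63 ^ k := by rw [← mul_pow]; norm_num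
      have h90 : ((9/10 : ℝ) / (1/100)) ^ (2*k) = 90 ^ (2*k) := by norm_num
      have key : (63:ℝ) ^ k ≤ 90 ^ (2*k) * 1 := by
        rw [mul_one, pow_mul]
        exact pow_le_pow_left₀ (by norm_num) (by norm_num) k
      have h100 : ((1/100 : ℝ)) ^ (2*k) * 100 ^ (2*k) = 1 := by
        rw [← mul_pow]; norm_num
      calc (n:ℝ) * 21 ^ k * (1/100 : ℝ) ^ (2*k) ≤ 63 ^ k * (1/100 : ℝ) ^ (2*k) :=
            mul_le_mul_of_nonneg_right h63 (by positivity)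
        _ ≤ 90 ^ (2*k) * (1/100 : ℝ) ^ (2*k) := by
            rw [mul_one] at key
            exact mul_le_mul_of_nonneg_right key (by positivity)
        _ = (9/10 : ℝ) ^ (2*k) := by
            rw [← mul_pow]
            norm_num
    -- the main pow inequality
    have hmain : ((1/100 : ℝ) * B) ^ (2*k) ≤ ∑ x ∈ s, D x * (∑ i, x i * w i) ^ (2 * k) := by
      have hstep1 : D x0 * (∑ i, x0 i * w i) ^ (2 * k) ≤
          ∑ x ∈ s, D x * (∑ i, x i * w i) ^ (2 * k) := by
        refine Finset.single_le_sum (f := fun x => D x * (∑ i, x i * w i) ^ (2 * k))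
          (fun x hx => mul_nonneg ?_ ?_) hx0s
        · by_cases h : x ∈ s <;> simp [D, h, inv_nonneg.2 hscard0R.le]
        · exact (even_two_mul k).pow_nonneg _
      have hDx0 : D x0 = ((s.card : ℝ))⁻¹ := by simp [D, hx0s]
      have hstep2 : ((n:ℝ) * 21 ^ k)⁻¹ * ((9/10 : ℝ) * B) ^ (2*k) ≤
          D x0 * (∑ i, x0 i * w i) ^ (2 * k) := by
        rw [hDx0]
        refine mul_le_mul ?_ ?_ (by positivity) (inv_nonneg.2 hscard0R.le)
        · exact inv_anti₀ hscard0R hcard_le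
        · exact pow_le_pow_left₀ (by positivity) hx0ip _
      refine le_trans ?_ (hstep2.trans hstep1)
      rw [mul_pow, mul_pow]
      have hnk : (0:ℝ) < (n:ℝ) * 21 ^ k := by positivity
      have h : (1/100:ℝ)^(2*k) ≤ ((n:ℝ)*21^k)⁻¹ * (9/10:ℝ)^(2*k) := by
        rw [le_inv_mul_iff₀ hnk]
        exact hnum
      calc (1/100:ℝ)^(2*k) * B^(2*k) ≤ (((n:ℝ)*21^k)⁻¹ * (9/10:ℝ)^(2*k)) * B^(2*k) :=
            mul_le_mul_of_nonneg_right h (by positivity)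
        _ = ((n:ℝ)*21^k)⁻¹ * ((9/10:ℝ)^(2*k) * B^(2*k)) := by ring
    -- conclude via rpow
    have hA : (0:ℝ) ≤ (1/100 : ℝ) * B := by positivity
    have hexp : (0:ℝ) ≤ (1:ℝ)/(2*(k:ℝ)) := by positivity
    calc (1/100 : ℝ) * B
        = (((1/100 : ℝ) * B) ^ (2*k)) ^ ((1:ℝ)/(2*(k:ℝ))) := by
          rw [← Real.rpow_natCast ((1/100 : ℝ) * B) (2*k), ← Real.rpow_mul hA]
          rw [show (((2*k : ℕ):ℝ) * ((1:ℝ)/(2*(k:ℝ)))) = 1 by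
            push_cast
            field_simp]
          rw [Real.rpow_one]
      _ ≤ (∑ x ∈ s, D x * (∑ i, x i * w i) ^ (2 * k)) ^ ((1:ℝ)/(2*(k:ℝ))) :=
          Real.rpow_le_rpow (by positivity) hmain hexp
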